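/- With H_0 = z_3(z_7 − z_3 z_4)^2 − z_5^3 and the contact Poisson bracket on R^7 (n = 3), for every nonnegative integer i: {H_0, z_3^i (z_7 − z_3 z_4)^2} = 4 z_3^i (z_7 z_5^3 − z_3 z_4 z_5^3). -/
import Mathlib


open MvPolynomial

/-- Index type for canonical coordinates on `ℝ^{2n+1}`: `Sum.inl (Sum.inl i)` is `z_i`,
`Sum.inl (Sum.inr i)` is `z_{n+i}`, and `Sum.inr ()` is the contact variable `z_{2n+1}`. -/
abbrev CIdx (n : ℕ) := (Fin n ⊕ Fin n) ⊕ Unit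

/-- The contact Poisson bracket on polynomials on `ℝ^{2n+1}` in canonical coordinates. -/
noncomputable def cbr (n : ℕ) (Φ Ψ : MvPolynomial (CIdx n) ℝ) : MvPolynomial (CIdx n) ℝ :=
  Φ * pderiv (Sum.inr ()) Ψ - Ψ * pderiv (Sum.inr ()) Φ +
  ∑ i : Fin n,
    ((pderiv (Sum.inl (Sum.inl i)) Φ +
        X (Sum.inl (Sum.inr i)) * pderiv (Sum.inr ()) Φ) * pderiv (Sum.inl (Sum.inr i)) Ψ -
     (pderiv (Sum.inl (Sum.inl i)) Ψ +
        X (Sum.inl (Sum.inr i)) * pderiv (Sum.inr ()) Ψ) * pderiv (Sum.inl (Sum.inr i)) Φ)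
/-- The coordinate `z₃ = T` on `ℝ⁷` (the third of `z₁, z₂, z₃`). -/
noncomputable def z3 : MvPolynomial (CIdx 3) ℝ := X (Sum.inl (Sum.inl 2))
/-- The coordinate `z₄` (the momentum paired with `z₁`). -/
noncomputable def z4 : MvPolynomial (CIdx 3) ℝ := X (Sum.inl (Sum.inr 0))
/-- The coordinate `z₅` (the momentum paired with `z₂`). -/
noncomputable def z5 : MvPolynomial (CIdx 3) ℝ := X (Sum.inl (Sum.inr 1))
/-- The coordinate `z₆` (the momentum paired with `z₃`). -/
noncomputable def z6 : MvPolynomial (CIdx 3) ℝ := X (Sum.inl (Sum.inr 2))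
/-- The contact coordinate `z₇ = P`. -/
noncomputable def z7 : MvPolynomial (CIdx 3) ℝ := X (Sum.inr ())

/-- The unperturbed Debye–Hückel Hamiltonian `H₀ = z₃ (z₇ − z₃ z₄)² − z₅³`. -/
noncomputable def H0 : MvPolynomial (CIdx 3) ℝ := z3 * (z7 - z3 * z4) ^ 2 - z5 ^ 3
/-- `{H₀, z₃^i (z₇ − z₃ z₄)²} = 4 z₃^i (z₇ z₅³ − z₃ z₄ z₅³)`. -/
theorem debyeHuckel_bracket_special (i : ℕ) :
    cbr 3 H0 (z3 ^ i * (z7 - z3 * z4) ^ 2) =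
      4 * z3 ^ i * (z7 * z5 ^ 3 - z3 * z4 * z5 ^ 3) := by
  simp only [cbr, H0, z3, z4, z5, z7, Fin.sum_univ_three, map_sub, map_add, map_mul,
    Derivation.leibniz_pow, pderiv_X, Pi.single_apply, smul_eq_mul]
  norm_num [Pi.single_apply, Sum.inl.injEq, Sum.inr.injEq, Fin.ext_iff]
  simp only [reduceCtorEq, if_false, Fin.isValue, show ((1:Fin 3) = 2) = False by simp, show ((0:Fin 3) = 2) = False by simp, show ((2:Fin 3) = 2) = True by simp, show ((0:Fin 3) = 0) = True by simp, show ((1:Fin 3) = 1) = True by simp, if_true]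
  ring
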